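/- Let H be a real Hilbert space with continuous dual H'. Let W be a real vector space equipped with linear maps J : W → H and D : W → H', and a function s : W → ℝ with s(u) ≥ 0 for all u ∈ W; define the triple norm ⦀u⦀ = (‖Ju‖²_H + ‖Du‖²_{H'} + s(u))^{1/2}. Let a : H × H → ℝ be a bilinear form satisfying |a(x,y)| ≤ c_a ‖x‖_H ‖y‖_H for all x, y ∈ H, and define b : W × H → ℝ by b(u,v) = (Du)(v) + a(Ju, v). Assume β > 0 satisfies 2β ≤ c_a² + 1, and assume that for every u ∈ W there exists v_u ∈ H with ‖v_u‖_H ≤ ‖Ju‖_H and b(u, v_u) ≥ β (‖Ju‖²_H + s(u)). Then, setting μ = (c_a² + 1)/(2β) (so μ ≥ 1), for every u ∈ W there exists v ∈ H such that ‖v‖_H ≤ √2 μ ⦀u⦀ and b(u,v) ≥ ½ ⦀u⦀². In particular, for every u ∈ W with ⦀u⦀ ≠ 0, sup over nonzero v ∈ H of b(u,v)/‖v‖_H ≥ (β/(√2 (c_a² + 1))) ⦀u⦀. -/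

import Mathlib

set_option maxHeartbeats 1000000 in


/-- Abstract inf-sup construction (common core of Lemma 4.1, Propositions 4.5, 4.6
and Lemma 5.2): given a coercivity-type bound realized by a test function `vu`
with `‖vu‖ ≤ ‖J u‖`, the combined test function `v = z + μ • vu` (with `z` the Riesz
representative of `D u` and `μ = (c_a² + 1)/(2β)`) satisfies `‖v‖ ≤ √2 μ ⦀u⦀` and
`b u v ≥ ½ ⦀u⦀²`, whence the inf-sup inequality with constant `β/(√2 (c_a² + 1))`. -/
theorem abstract_infsup_construction
    {W H : Type*} [AddCommGroup W] [Module ℝ W]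
    [NormedAddCommGroup H] [InnerProductSpace ℝ H] [CompleteSpace H]
    (J : W →ₗ[ℝ] H) (D : W →ₗ[ℝ] (H →L[ℝ] ℝ)) (s : W → ℝ) (hs : ∀ u : W, 0 ≤ s u)
    (a : H →ₗ[ℝ] H →ₗ[ℝ] ℝ) (ca : ℝ)
    (ha : ∀ x y : H, |a x y| ≤ ca * ‖x‖ * ‖y‖)
    (β : ℝ) (hβ : 0 < β) (hβca : 2 * β ≤ ca ^ 2 + 1)
    (htest : ∀ u : W, ∃ vu : H, ‖vu‖ ≤ ‖J u‖ ∧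
      (D u) vu + a (J u) vu ≥ β * (‖J u‖ ^ 2 + s u)) :
    ∀ u : W,
      (∃ v : H,
        ‖v‖ ≤ Real.sqrt 2 * ((ca ^ 2 + 1) / (2 * β)) *
            Real.sqrt (‖J u‖ ^ 2 + ‖D u‖ ^ 2 + s u) ∧
        (D u) v + a (J u) v ≥
          (1 / 2) * Real.sqrt (‖J u‖ ^ 2 + ‖D u‖ ^ 2 + s u) ^ 2) ∧
      (Real.sqrt (‖J u‖ ^ 2 + ‖D u‖ ^ 2 + s u) ≠ 0 →
        (β / (Real.sqrt 2 * (ca ^ 2 + 1))) * Real.sqrt (‖J u‖ ^ 2 + ‖D u‖ ^ 2 + s u) ≤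
          ⨆ v : {v : H // v ≠ 0}, ((D u) v.1 + a (J u) v.1) / ‖v.1‖) := by
  intro u
  obtain ⟨vu, hvu, hb⟩ := htest u
  have hca2 : (0:ℝ) < ca ^ 2 + 1 := by positivity
  set μ : ℝ := (ca ^ 2 + 1) / (2 * β) with hμdef
  have hμ1 : 1 ≤ μ := (one_le_div (by linarith)).2 hβca
  have hμpos : 0 < μ := lt_of_lt_of_le one_pos hμ1
  set T2 : ℝ := ‖J u‖ ^ 2 + ‖D u‖ ^ 2 + s u with hT2def
  have hT2nn : 0 ≤ T2 := by
    have := hs u; positivity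
  have hS2 : Real.sqrt T2 ^ 2 = T2 := Real.sq_sqrt hT2nn
  set z : H := (InnerProductSpace.toDual ℝ H).symm (D u) with hzdef
  have hznorm : ‖z‖ = ‖D u‖ := LinearIsometryEquiv.norm_map _ _
  have hDz : (D u) z = ‖D u‖ ^ 2 := by
    have h1 : inner ℝ z z = (D u) z := InnerProductSpace.toDual_symm_apply
    rw [← h1, real_inner_self_eq_norm_sq, hznorm]
  set v : H := z + μ • vu with hvdef
  -- lower bound on b u v
  have haz : -(ca * ‖J u‖ * ‖D u‖) ≤ a (J u) z := by
    have := (abs_le.1 (ha (J u) z)).1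
    rw [hznorm] at this; linarith
  have hDuv : (D u) v + a (J u) v
      = ‖D u‖ ^ 2 + a (J u) z + μ * ((D u) vu + a (J u) vu) := by
    simp [hvdef, hDz, map_add, map_smul, smul_eq_mul]
    ring
  have hbv : (D u) v + a (J u) v ≥ (1/2) * T2 := by
    rw [hDuv]
    have hμβ : μ * β = (ca ^ 2 + 1) / 2 := by
      rw [hμdef]; field_simp
    have h3 : μ * ((D u) vu + a (J u) vu) ≥ μ * (β * (‖J u‖ ^ 2 + s u)) :=
      mul_le_mul_of_nonneg_left hb hμpos.le
    have h4 : μ * (β * (‖J u‖ ^ 2 + s u)) = (ca ^ 2 + 1) / 2 * (‖J u‖ ^ 2 + s u) := by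
      rw [← mul_assoc, hμβ]
    nlinarith [sq_nonneg (ca * ‖J u‖ - ‖D u‖), hs u]
  -- norm bound
  have hvnorm : ‖v‖ ≤ Real.sqrt 2 * μ * Real.sqrt T2 := by
    have h1 : ‖v‖ ≤ ‖D u‖ + μ * ‖vu‖ := by
      calc ‖v‖ ≤ ‖z‖ + ‖μ • vu‖ := norm_add_le _ _
        _ = ‖D u‖ + μ * ‖vu‖ := by
            rw [hznorm, norm_smul, Real.norm_eq_abs, abs_of_pos hμpos]
    have h2 : ‖D u‖ + μ * ‖vu‖ ≤ μ * (‖D u‖ + ‖J u‖) := by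
      have := norm_nonneg (D u)
      have h2' : μ * ‖vu‖ ≤ μ * ‖J u‖ := mul_le_mul_of_nonneg_left hvu hμpos.le
      nlinarith
    have h3 : ‖D u‖ + ‖J u‖ ≤ Real.sqrt 2 * Real.sqrt T2 := by
      rw [← Real.sqrt_mul (by norm_num : (0:ℝ) ≤ 2)]
      rw [show ‖D u‖ + ‖J u‖ = Real.sqrt ((‖D u‖ + ‖J u‖)^2) from
        (Real.sqrt_sq (by positivity)).symm]
      apply Real.sqrt_le_sqrt
      nlinarith [sq_nonneg (‖D u‖ - ‖J u‖), hs u]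
    calc ‖v‖ ≤ μ * (‖D u‖ + ‖J u‖) := h1.trans h2
      _ ≤ μ * (Real.sqrt 2 * Real.sqrt T2) := mul_le_mul_of_nonneg_left h3 hμpos.le
      _ = Real.sqrt 2 * μ * Real.sqrt T2 := by ring
  have hvnorm' : ‖v‖ ≤ Real.sqrt 2 * ((ca ^ 2 + 1) / (2 * β)) * Real.sqrt T2 := hvnorm
  have hbv' : (D u) v + a (J u) v ≥ (1/2) * Real.sqrt T2 ^ 2 := by rw [hS2]; exact hbv
  refine ⟨⟨v, hvnorm', hbv'⟩, ?_⟩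
  intro hSne
  set S := Real.sqrt T2 with hSdef
  have hSpos : 0 < S := lt_of_le_of_ne (Real.sqrt_nonneg _) (Ne.symm hSne)
  have hT2pos : 0 < T2 := by nlinarith
  have hvne : v ≠ 0 := by
    intro h
    rw [h] at hbv
    simp only [map_zero] at hbv
    nlinarith [hbv]
  have hvpos : 0 < ‖v‖ := norm_pos_iff.2 hvne
  have hbdd : BddAbove (Set.range fun w : {v : H // v ≠ 0} =>
      ((D u) w.1 + a (J u) w.1) / ‖w.1‖) := by
    refine ⟨‖D u‖ + ca * ‖J u‖, ?_⟩
    rintro x ⟨⟨w, hw⟩, rfl⟩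
    have hwpos : 0 < ‖w‖ := norm_pos_iff.2 hw
    rw [div_le_iff₀ hwpos]
    have h1 : (D u) w ≤ ‖D u‖ * ‖w‖ := by
      have := (D u).le_opNorm w
      rw [Real.norm_eq_abs] at this
      exact (le_abs_self _).trans this
    have h2 : a (J u) w ≤ ca * ‖J u‖ * ‖w‖ := (abs_le.1 (ha (J u) w)).2
    nlinarith
  have hle : ((D u) v + a (J u) v) / ‖v‖ ≤
      ⨆ w : {v : H // v ≠ 0}, ((D u) w.1 + a (J u) w.1) / ‖w.1‖ :=
    le_ciSup hbdd ⟨v, hvne⟩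
  refine le_trans ?_ hle
  have hr2 : (0:ℝ) < Real.sqrt 2 := Real.sqrt_pos.2 (by norm_num)
  have hchain : β / (Real.sqrt 2 * (ca ^ 2 + 1)) * S
      = ((1/2) * S ^ 2) / (Real.sqrt 2 * μ * S) := by
    rw [hμdef]
    field_simp
  rw [hchain]
  apply div_le_div₀ (by nlinarith) (by nlinarith [hbv']) hvpos hvnorm
  done
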